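/- Curvature of the Rényi entropy at the phase transition: let d₁, d₂, q₁, q₂ be positive real numbers with q₁/d₁ ≠ q₂/d₂, and define g : ℝ → ℝ by g(n) := log( d₁ (q₁/d₁)^n + d₂ (q₂/d₂)^n ), so that g(n) = (1−n) S_n where S_n is the Rényi entropy of the two-sector state. If n_* ∈ ℝ satisfies d₁ (q₁/d₁)^{n_*} = d₂ (q₂/d₂)^{n_*}, then g is twice differentiable at n_* and its second derivative there equals (1/4) ( log( (d₁ q₂)/(d₂ q₁) ) )². -/

import Mathlib

/-- curvature of the Rényi entropy at the phase transition. For positive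
reals `d₁, d₂, q₁, q₂` with `q₁/d₁ ≠ q₂/d₂` and `g(n) = log(d₁ (q₁/d₁)^n + d₂ (q₂/d₂)^n)`
(so `g(n) = (1−n) S_n`), if `n_*` satisfies `d₁ (q₁/d₁)^{n_*} = d₂ (q₂/d₂)^{n_*}`, then
`g` is twice differentiable at `n_*` and `g''(n_*) = (1/4) (log((d₁ q₂)/(d₂ q₁)))²`. -/
theorem stmt18 (d₁ d₂ q₁ q₂ : ℝ) (hd₁ : 0 < d₁) (hd₂ : 0 < d₂) (hq₁ : 0 < q₁)
    (hq₂ : 0 < q₂) (hne : q₁ / d₁ ≠ q₂ / d₂) (nstar : ℝ)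
    (hstar : d₁ * (q₁ / d₁) ^ nstar = d₂ * (q₂ / d₂) ^ nstar) :
    letI g : ℝ → ℝ := fun x => Real.log (d₁ * (q₁ / d₁) ^ x + d₂ * (q₂ / d₂) ^ x)
    ContDiffAt ℝ 2 g nstar ∧
    iteratedDeriv 2 g nstar = (1 / 4) * (Real.log ((d₁ * q₂) / (d₂ * q₁))) ^ 2 := by
  set g : ℝ → ℝ := fun x => Real.log (d₁ * (q₁ / d₁) ^ x + d₂ * (q₂ / d₂) ^ x) with hg
  have hr₁ : (0:ℝ) < q₁ / d₁ := div_pos hq₁ hd₁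
  have hr₂ : (0:ℝ) < q₂ / d₂ := div_pos hq₂ hd₂
  set a := Real.log (q₁ / d₁) with ha
  set b := Real.log (q₂ / d₂) with hb
  set f : ℝ → ℝ := fun x => d₁ * Real.exp (a * x) + d₂ * Real.exp (b * x) with hf
  have hgeq : g = fun x => Real.log (f x) := by
    funext x
    simp only [g, hf, Real.rpow_def_of_pos hr₁, Real.rpow_def_of_pos hr₂]
    rfl
  have hfpos : ∀ x, 0 < f x := fun x => by positivity
  -- first derivative of f
  set f' : ℝ → ℝ := fun x => d₁ * (Real.exp (a * x) * a) + d₂ * (Real.exp (b * x) * b)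
    with hf'
  have hfd : ∀ x, HasDerivAt f (f' x) x := by
    intro x
    have h1 : HasDerivAt (fun y => Real.exp (a*y)) (Real.exp (a*x) * a) x := by
      simpa using ((hasDerivAt_id x).const_mul a).exp
    have h2 : HasDerivAt (fun y => Real.exp (b*y)) (Real.exp (b*x) * b) x := by
      simpa using ((hasDerivAt_id x).const_mul b).exp
    exact (h1.const_mul d₁).add (h2.const_mul d₂)
  set f'' : ℝ → ℝ := fun x => d₁ * (Real.exp (a * x) * a * a) + d₂ * (Real.exp (b * x) * b * b)
    with hf''
  have hfd2 : ∀ x, HasDerivAt f' (f'' x) x := by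
    intro x
    have h1 : HasDerivAt (fun y => Real.exp (a*y)) (Real.exp (a*x) * a) x := by
      simpa using ((hasDerivAt_id x).const_mul a).exp
    have h2 : HasDerivAt (fun y => Real.exp (b*y)) (Real.exp (b*x) * b) x := by
      simpa using ((hasDerivAt_id x).const_mul b).exp
    exact ((h1.mul_const a).const_mul d₁).add ((h2.mul_const b).const_mul d₂)
  -- derivative of g
  have hgd : ∀ x, HasDerivAt g (f' x / f x) x := by
    intro x
    rw [hgeq]
    have := (Real.hasDerivAt_log (hfpos x).ne').comp x (hfd x)
    rw [div_eq_inv_mul]; exact this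
  have hderiv : deriv g = fun x => f' x / f x := funext fun x => (hgd x).deriv
  -- ContDiffAt
  have hfc : ContDiff ℝ 2 f := by
    apply ContDiff.add
    · exact contDiff_const.mul ((contDiff_const.mul contDiff_id).exp)
    · exact contDiff_const.mul ((contDiff_const.mul contDiff_id).exp)
  have hcd : ContDiffAt ℝ 2 g nstar := by
    rw [hgeq]
    exact (Real.contDiffAt_log.mpr (hfpos nstar).ne').comp nstar hfc.contDiffAt
  refine ⟨hcd, ?_⟩
  -- second derivative value
  have hgd2 : HasDerivAt (deriv g)
      ((f'' nstar * f nstar - f' nstar * f' nstar) / (f nstar)^2) nstar := by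
    rw [hderiv]
    exact (hfd2 nstar).div (hfd nstar) (hfpos nstar).ne'
  have h2 : iteratedDeriv 2 g nstar
      = (f'' nstar * f nstar - f' nstar * f' nstar) / (f nstar)^2 := by
    rw [iteratedDeriv_succ, iteratedDeriv_one]
    exact hgd2.deriv
  rw [h2]
  -- numerics at nstar
  set c := d₁ * Real.exp (a * nstar) with hc
  have hcpos : 0 < c := by positivity
  have hcc : d₂ * Real.exp (b * nstar) = c := by
    rw [hc]
    simpa [Real.rpow_def_of_pos hr₁, Real.rpow_def_of_pos hr₂] using hstar.symm
  have hfv : f nstar = 2 * c := by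
    simp only [hf]; linear_combination (-1 : ℝ) * hc + hcc
  have hfv' : f' nstar = c * a + c * b := by
    simp only [hf']; linear_combination (-a) * hc + b * hcc
  have hfv'' : f'' nstar = c * (a*a) + c * (b*b) := by
    simp only [hf'']; linear_combination (-(a*a)) * hc + (b*b) * hcc
  have hlog : Real.log ((d₁ * q₂) / (d₂ * q₁)) = b - a := by
    rw [hb, ha, ← Real.log_div hr₂.ne' hr₁.ne']
    congr 1
    field_simp
  rw [hfv, hfv', hfv'', hlog]
  field_simp
  ring
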